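/- For every y > 0, setting a_n = 4(πn/y)² for n ≥ 1, one has Σ_{n≥2} (n²−1) ( (1/6) n⁴y⁴ − 2n²y² + 2 ) e^{−n²y²/4} + (√π/3) Σ_{n≥1} ( (8/y³)(24 a_n − 36 a_n² + 8 a_n³) + (16/y) a_n² ) e^{−a_n} = 1. -/

import Mathlib

set_option maxHeartbeats 1000000
open Real

noncomputable def Qs (k : ℕ) (t : ℝ) : ℝ := ∑' n : ℤ, ((n:ℝ)^2)^k * Real.exp (-π * t * (n:ℝ)^2)

lemma summable_Qnat (k : ℕ) {t : ℝ} (ht : 0 < t) :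
    Summable (fun n : ℕ => ((n:ℝ)^2)^k * Real.exp (-π * t * (n:ℝ)^2)) := by
  have hr : ‖Real.exp (-π * t)‖ < 1 := by
    rw [Real.norm_eq_abs, abs_of_pos (Real.exp_pos _)]
    apply Real.exp_lt_one_iff.mpr
    have := Real.pi_pos
    nlinarith
  apply Summable.of_nonneg_of_le (fun n => by positivity)
    (fun n => ?_) (summable_pow_mul_geometric_of_norm_lt_one (2*k) hr)
  have h1 : ((n:ℝ)^2)^k = (n:ℝ)^(2*k) := by rw [← pow_mul, mul_comm]
  have h2 : Real.exp (-π * t * (n:ℝ)^2) ≤ Real.exp (-π * t) ^ n := by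
    rw [← Real.exp_nat_mul]
    apply Real.exp_le_exp.mpr
    have hn : (n:ℝ) ≤ (n:ℝ)^2 := by
      rcases Nat.eq_zero_or_pos n with h | h
      · simp [h]
      · have h1 : (1:ℝ) ≤ (n:ℝ) := Nat.one_le_cast.mpr h
        nlinarith
    have hπ := Real.pi_pos
    nlinarith [mul_le_mul_of_nonneg_left hn (le_of_lt (mul_pos hπ ht))]
  rw [h1]
  exact mul_le_mul_of_nonneg_left h2 (by positivity)

lemma summable_Q (k : ℕ) {t : ℝ} (ht : 0 < t) :
    Summable (fun n : ℤ => ((n:ℝ)^2)^k * Real.exp (-π * t * (n:ℝ)^2)) := by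
  apply Summable.of_nat_of_neg
  · exact summable_Qnat k ht
  · simpa using summable_Qnat k ht
lemma hasDerivAt_Qs (k : ℕ) {t : ℝ} (ht : 0 < t) :
    HasDerivAt (Qs k) (-π * Qs (k+1) t) t := by
  have h2 : (0:ℝ) < t/2 := by linarith
  have key : HasDerivAt (fun z => ∑' n : ℤ, ((n:ℝ)^2)^k * Real.exp (-π * z * (n:ℝ)^2))
      (∑' n : ℤ, (-π * (((n:ℝ)^2)^(k+1) * Real.exp (-π * t * (n:ℝ)^2)))) t := by
    apply hasDerivAt_tsum_of_isPreconnected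
      (u := fun n : ℤ => π * (((n:ℝ)^2)^(k+1) * Real.exp (-π * (t/2) * (n:ℝ)^2)))
      (g' := fun (n : ℤ) (z : ℝ) => -π * (((n:ℝ)^2)^(k+1) * Real.exp (-π * z * (n:ℝ)^2)))
      (t := Set.Ioi (t/2)) (y₀ := t)
    · exact ((summable_Q (k+1) h2).mul_left π)
    · exact isOpen_Ioi
    · exact isPreconnected_Ioi
    · intro n y _
      have h1 : HasDerivAt (fun z : ℝ => -π * z * (n:ℝ)^2) (-π * (n:ℝ)^2) y := by
        simpa using (((hasDerivAt_id y).const_mul (-π)).mul_const ((n:ℝ)^2))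
      have := (h1.exp).const_mul (((n:ℝ)^2)^k)
      convert this using 1
      · rfl
      ring
    · intro n y hy
      rw [Real.norm_eq_abs, abs_mul, abs_neg, abs_of_pos Real.pi_pos,
        abs_of_nonneg (by positivity)]
      have hy' : t/2 ≤ y := le_of_lt (Set.mem_Ioi.mp hy)
      have hexp : Real.exp (-π * y * (n:ℝ)^2) ≤ Real.exp (-π * (t/2) * (n:ℝ)^2) := by
        apply Real.exp_le_exp.mpr
        have hπ := Real.pi_pos
        nlinarith [sq_nonneg ((n:ℝ)), mul_le_mul_of_nonneg_left hy' (mul_nonneg hπ.le (sq_nonneg (n:ℝ)))]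
      exact mul_le_mul_of_nonneg_left
        (mul_le_mul_of_nonneg_left hexp (by positivity)) Real.pi_pos.le
    · exact Set.mem_Ioi.mpr (by linarith)
    · exact summable_Q k ht
    · exact Set.mem_Ioi.mpr (by linarith)
  have : (∑' n : ℤ, (-π * (((n:ℝ)^2)^(k+1) * Real.exp (-π * t * (n:ℝ)^2)))) = -π * Qs (k+1) t := by
    rw [Qs, tsum_mul_left]
  rw [this] at key
  exact key
noncomputable def Es (j : ℤ) (k : ℕ) (t : ℝ) : ℝ := (Real.sqrt t) ^ j * Qs k (1/t)

lemma hasDerivAt_Es (j : ℤ) (k : ℕ) {t : ℝ} (ht : 0 < t) :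
    HasDerivAt (Es j k) ((j/2 : ℝ) * Es (j-2) k t + π * Es (j-4) (k+1) t) t := by
  obtain ⟨s, hs0, rfl⟩ : ∃ s, 0 < s ∧ s^2 = t :=
    ⟨Real.sqrt t, Real.sqrt_pos.mpr ht, Real.sq_sqrt ht.le⟩
  have hs : s ≠ 0 := ne_of_gt hs0
  have hrs : Real.sqrt (s^2) = s := Real.sqrt_sq hs0.le
  have hsqrt : HasDerivAt Real.sqrt (1 / (2 * s)) (s^2) := by
    have := Real.hasDerivAt_sqrt (ne_of_gt ht)
    rwa [hrs] at this
  have hz : HasDerivAt (fun x : ℝ => x ^ j) ((j:ℝ) * s ^ (j-1)) s := by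
    have := hasDerivAt_zpow j s (Or.inl hs)
    rwa [] at this
  have h1 : HasDerivAt (fun x => (Real.sqrt x) ^ j) ((j : ℝ) * s^(j-1) * (1 / (2 * s))) (s^2) := by
    rw [← hrs] at hz
    have h := hz.comp (s^2) hsqrt
    rw [hrs] at h
    exact h
  have h2 : HasDerivAt (fun x : ℝ => Qs k (1/x)) (-π * Qs (k+1) (1/s^2) * (-(1/(s^2)^2))) (s^2) := by
    have hinv : HasDerivAt (fun x : ℝ => 1/x) (-(1/(s^2)^2)) (s^2) := by
      simpa [one_div] using hasDerivAt_inv (ne_of_gt ht)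
    exact (hasDerivAt_Qs (k := k) (t := 1/s^2) (by positivity)).comp (s^2) hinv
  have key := h1.mul h2
  have : HasDerivAt (Es j k)
      ((j:ℝ) * s^(j-1) * (1 / (2*s)) * Qs k (1/s^2)
        + s^j * (-π * Qs (k+1) (1/s^2) * (-(1/(s^2)^2)))) (s^2) := by
    unfold Es
    rw [hrs] at key
    exact key
  convert this using 1
  unfold Es
  rw [hrs]
  rw [show j - 2 = j + (-2) by ring, show j - 4 = j + (-4) by ring,
    show j - 1 = j + (-1) by ring, zpow_add₀ hs, zpow_add₀ hs, zpow_add₀ hs]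
  simp only [zpow_neg, zpow_one, show ((2:ℤ)) = ((2:ℕ):ℤ) from rfl,
    show ((4:ℤ)) = ((4:ℕ):ℤ) from rfl, zpow_natCast]
  field_simp

lemma deriv_transfer {f g : ℝ → ℝ} {f' g' : ℝ} {t : ℝ} (ht : 0 < t)
    (h : ∀ x, 0 < x → f x = g x) (hf : HasDerivAt f f' t) (hg : HasDerivAt g g' t) :
    f' = g' := by
  have hev : g =ᶠ[nhds t] f :=
    Filter.eventually_of_mem (isOpen_Ioi.mem_nhds (Set.mem_Ioi.mpr ht))
      (fun x hx => (h x (Set.mem_Ioi.mp hx)).symm)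
  exact hf.unique (hg.congr_of_eventuallyEq hev.symm)

lemma R0 {t : ℝ} (ht : 0 < t) : Qs 0 t = Es (-1) 0 t := by
  unfold Qs Es
  have h := Real.tsum_exp_neg_mul_int_sq ht
  simp only [pow_zero, one_mul]
  rw [h]
  congr 1
  · rw [zpow_neg_one, ← Real.sqrt_eq_rpow, one_div]
  · apply tsum_congr
    intro n
    rw [pow_zero, one_mul, neg_div, div_eq_mul_inv, ← one_div, mul_assoc]
    ring_nf

lemma R1 {t : ℝ} (ht : 0 < t) :
    -π * Qs 1 t = (-1/2 : ℝ) * Es (-3) 0 t + π * Es (-5) 1 t := by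
  have h := deriv_transfer ht (fun x hx => R0 hx) (hasDerivAt_Qs 0 ht)
    (hasDerivAt_Es (-1) 0 ht)
  norm_num at h
  linarith [h]

lemma R2 {t : ℝ} (ht : 0 < t) :
    π^2 * Qs 2 t = (3/4 : ℝ) * Es (-5) 0 t - 3*π * Es (-7) 1 t + π^2 * Es (-9) 2 t := by
  have hf : HasDerivAt (fun x => -π * Qs 1 x) (-π * (-π * Qs 2 t)) t :=
    (hasDerivAt_Qs 1 ht).const_mul (-π)
  have hg : HasDerivAt (fun x => (-1/2 : ℝ) * Es (-3) 0 x + π * Es (-5) 1 x)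
      ((-1/2 : ℝ) * (((-3:ℤ)/2 : ℝ) * Es (-3-2) 0 t + π * Es (-3-4) 1 t)
        + π * (((-5:ℤ)/2 : ℝ) * Es (-5-2) 1 t + π * Es (-5-4) 2 t)) t :=
    ((hasDerivAt_Es (-3) 0 ht).const_mul (-1/2)).add ((hasDerivAt_Es (-5) 1 ht).const_mul π)
  have h := deriv_transfer ht (fun x hx => R1 hx) hf hg
  norm_num at h
  linear_combination h

lemma R3 {t : ℝ} (ht : 0 < t) :
    π^3 * Qs 3 t = (15/8 : ℝ) * Es (-7) 0 t - (45/4)*π * Es (-9) 1 t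
      + (15/2)*π^2 * Es (-11) 2 t - π^3 * Es (-13) 3 t := by
  have hf : HasDerivAt (fun x => π^2 * Qs 2 x) (π^2 * (-π * Qs 3 t)) t :=
    (hasDerivAt_Qs 2 ht).const_mul (π^2)
  have hg : HasDerivAt
      (fun x => (3/4 : ℝ) * Es (-5) 0 x - 3*π * Es (-7) 1 x + π^2 * Es (-9) 2 x)
      ((3/4 : ℝ) * (((-5:ℤ)/2 : ℝ) * Es (-5-2) 0 t + π * Es (-5-4) 1 t)
        - 3*π * (((-7:ℤ)/2 : ℝ) * Es (-7-2) 1 t + π * Es (-7-4) 2 t)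
        + π^2 * (((-9:ℤ)/2 : ℝ) * Es (-9-2) 2 t + π * Es (-9-4) 3 t)) t :=
    (((hasDerivAt_Es (-5) 0 ht).const_mul (3/4)).sub
      ((hasDerivAt_Es (-7) 1 ht).const_mul (3*π))).add
      ((hasDerivAt_Es (-9) 2 ht).const_mul (π^2))
  have h := deriv_transfer ht (fun x hx => R2 hx) hf hg
  norm_num at h
  linear_combination -1 * h

lemma summable_poly_nat {t : ℝ} (ht : 0 < t) (c0 c1 c2 c3 : ℝ) :
    Summable (fun n : ℕ => (c3 * ((n:ℝ)^2)^3 + c2 * ((n:ℝ)^2)^2 + c1 * (n:ℝ)^2 + c0)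
      * Real.exp (-π * t * (n:ℝ)^2)) := by
  have h := (((summable_Qnat 3 ht).mul_left c3).add ((summable_Qnat 2 ht).mul_left c2)).add
    (((summable_Qnat 1 ht).mul_left c1).add ((summable_Qnat 0 ht).mul_left c0))
  apply h.congr
  intro n
  simp only [pow_one, pow_zero, one_mul]
  ring

lemma summable_poly_int {t : ℝ} (ht : 0 < t) (c0 c1 c2 c3 : ℝ) :
    Summable (fun n : ℤ => (c3 * ((n:ℝ)^2)^3 + c2 * ((n:ℝ)^2)^2 + c1 * (n:ℝ)^2 + c0)
      * Real.exp (-π * t * (n:ℝ)^2)) := by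
  have h := (((summable_Q 3 ht).mul_left c3).add ((summable_Q 2 ht).mul_left c2)).add
    (((summable_Q 1 ht).mul_left c1).add ((summable_Q 0 ht).mul_left c0))
  apply h.congr
  intro n
  simp only [pow_one, pow_zero, one_mul]
  ring

lemma tsum_int_even {g : ℤ → ℝ} (h1 : Summable fun n : ℕ => g n)
    (heven : ∀ n : ℤ, g (-n) = g n) :
    ∑' n : ℤ, g n = 2 * (∑' n : ℕ, g ((n:ℤ)+1)) + g 0 := by
  have h1' : Summable fun n : ℕ => g ((n:ℤ)+1) := by
    have := (summable_nat_add_iff 1).mpr h1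
    apply this.congr
    intro n
    push_cast
    ring_nf
  have h2 : Summable fun n : ℕ => g (-((n:ℤ)+1)) := by
    apply h1'.congr
    intro n
    rw [heven]
  rw [tsum_of_nat_of_neg_add_one h1 h2]
  have e2 : ∑' n : ℕ, g (-((n:ℤ)+1)) = ∑' n : ℕ, g ((n:ℤ)+1) :=
    tsum_congr fun n => heven _
  have e1 : ∑' n : ℕ, g (n:ℤ) = g 0 + ∑' n : ℕ, g ((n:ℤ)+1) := by
    rw [Summable.tsum_eq_zero_add h1]
    norm_num
  rw [e1, e2]
  ring

/-- Main ℤ→ℕ sum expansion for polynomial-Gaussian series. -/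
lemma nat_sum {t : ℝ} (ht : 0 < t) (c0 c1 c2 c3 : ℝ) :
    2 * (∑' n : ℕ, (c3 * (((n:ℝ)+1)^2)^3 + c2 * (((n:ℝ)+1)^2)^2 + c1 * ((n:ℝ)+1)^2 + c0)
        * Real.exp (-π * t * ((n:ℝ)+1)^2)) + c0
      = c3 * Qs 3 t + c2 * Qs 2 t + c1 * Qs 1 t + c0 * Qs 0 t := by
  set g : ℤ → ℝ := fun n => (c3 * ((n:ℝ)^2)^3 + c2 * ((n:ℝ)^2)^2 + c1 * (n:ℝ)^2 + c0)
    * Real.exp (-π * t * (n:ℝ)^2) with hg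
  have heven : ∀ n : ℤ, g (-n) = g n := by
    intro n; simp only [hg]; push_cast; ring_nf
  have h1 : Summable fun n : ℕ => g n := by
    have := summable_poly_nat ht c0 c1 c2 c3
    apply this.congr
    intro n
    simp only [hg]
    push_cast
    ring
  have key := tsum_int_even h1 heven
  have lhs_eq : ∑' n : ℤ, g n
      = c3 * Qs 3 t + c2 * Qs 2 t + c1 * Qs 1 t + c0 * Qs 0 t := by
    simp only [hg, Qs]
    rw [show (fun n : ℤ => (c3 * ((n:ℝ)^2)^3 + c2 * ((n:ℝ)^2)^2 + c1 * (n:ℝ)^2 + c0)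
        * Real.exp (-π * t * (n:ℝ)^2))
      = (fun n : ℤ => c3 * (((n:ℝ)^2)^3 * Real.exp (-π * t * (n:ℝ)^2))
          + (c2 * (((n:ℝ)^2)^2 * Real.exp (-π * t * (n:ℝ)^2))
          + (c1 * (((n:ℝ)^2)^1 * Real.exp (-π * t * (n:ℝ)^2))
          + c0 * (((n:ℝ)^2)^0 * Real.exp (-π * t * (n:ℝ)^2))))) from funext fun n => by
        simp only [pow_one, pow_zero, one_mul]; ring]
    rw [Summable.tsum_add ((summable_Q 3 ht).mul_left c3)
        (((summable_Q 2 ht).mul_left c2).add (((summable_Q 1 ht).mul_left c1).add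
          ((summable_Q 0 ht).mul_left c0))),
      Summable.tsum_add ((summable_Q 2 ht).mul_left c2)
        (((summable_Q 1 ht).mul_left c1).add ((summable_Q 0 ht).mul_left c0)),
      Summable.tsum_add ((summable_Q 1 ht).mul_left c1) ((summable_Q 0 ht).mul_left c0),
      tsum_mul_left, tsum_mul_left, tsum_mul_left, tsum_mul_left]
    ring
  have g0 : g 0 = c0 := by simp [hg]
  have gn : ∀ n : ℕ, g ((n:ℤ)+1)
      = (c3 * (((n:ℝ)+1)^2)^3 + c2 * (((n:ℝ)+1)^2)^2 + c1 * ((n:ℝ)+1)^2 + c0)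
        * Real.exp (-π * t * ((n:ℝ)+1)^2) := by
    intro n; simp only [hg]; push_cast; ring_nf
  rw [← lhs_eq, key, g0]
  congr 2
  exact tsum_congr fun n => (gn n).symm

lemma summable_poly_nat_shift {t : ℝ} (ht : 0 < t) (c0 c1 c2 c3 : ℝ) :
    Summable (fun n : ℕ => (c3 * (((n:ℝ)+1)^2)^3 + c2 * (((n:ℝ)+1)^2)^2 + c1 * ((n:ℝ)+1)^2 + c0)
      * Real.exp (-π * t * ((n:ℝ)+1)^2)) := by
  have := (summable_nat_add_iff 1).mpr (summable_poly_nat ht c0 c1 c2 c3)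
  apply this.congr
  intro n
  push_cast
  ring_nf

/-- Jacobi-type identity for the diameter of the Brownian tree: for `y > 0`, with
`aₙ = 4(πn/y)²`,
`Σ_{n≥2} (n²-1)((1/6)n⁴y⁴ - 2n²y² + 2) e^{-n²y²/4}
 + (√π/3) Σ_{n≥1} ((8/y³)(24aₙ - 36aₙ² + 8aₙ³) + (16/y)aₙ²) e^{-aₙ} = 1`. -/
theorem diameter_tail_plus_cdf_eq_one (y : ℝ) (hy : 0 < y) :
    let a : ℕ → ℝ := fun n => 4 * (Real.pi * ((n : ℝ) + 1) / y) ^ 2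
    (∑' n : ℕ,
        (((n : ℝ) + 2) ^ 2 - 1) *
          ((1 / 6) * ((n : ℝ) + 2) ^ 4 * y ^ 4 - 2 * ((n : ℝ) + 2) ^ 2 * y ^ 2 + 2) *
          Real.exp (-(((n : ℝ) + 2) ^ 2 * y ^ 2 / 4)))
      + (Real.sqrt Real.pi / 3) *
          ∑' n : ℕ,
            ((8 / y ^ 3) * (24 * a n - 36 * (a n) ^ 2 + 8 * (a n) ^ 3)
              + (16 / y) * (a n) ^ 2) * Real.exp (-(a n)) = 1 := by
  intro a
  have hπ := Real.pi_pos
  have hy' : y ≠ 0 := ne_of_gt hy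
  set t : ℝ := y^2/(4*π) with ht_def
  have ht : 0 < t := by rw [ht_def]; positivity
  have hu : 0 < 1/t := by positivity
  -- first sum
  have hexp1 : ∀ m : ℝ, -π * t * m^2 = -(m^2 * y^2/4) := by
    intro m; rw [ht_def]; field_simp
  have term1 : ∀ m : ℝ,
      ((y^4/6) * (m^2)^3 + (-(2*y^2+y^4/6)) * (m^2)^2 + (2+2*y^2) * m^2 + (-2))
          * Real.exp (-π * t * m^2)
        = (m^2 - 1) * ((1/6) * m^4 * y^4 - 2 * m^2 * y^2 + 2) * Real.exp (-(m^2 * y^2/4)) := by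
    intro m; rw [hexp1]; ring
  have key1 := nat_sum ht (-2) (2+2*y^2) (-(2*y^2+y^4/6)) (y^4/6)
  have split1 : (∑' n : ℕ, ((y^4/6) * (((n:ℝ)+1)^2)^3 + (-(2*y^2+y^4/6)) * (((n:ℝ)+1)^2)^2
        + (2+2*y^2) * ((n:ℝ)+1)^2 + (-2)) * Real.exp (-π * t * ((n:ℝ)+1)^2))
      = ∑' n : ℕ, ((((n:ℝ)+2)^2 - 1) *
          ((1/6) * ((n:ℝ)+2)^4 * y^4 - 2 * ((n:ℝ)+2)^2 * y^2 + 2) *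
          Real.exp (-(((n:ℝ)+2)^2 * y^2 / 4))) := by
    rw [Summable.tsum_eq_zero_add (summable_poly_nat_shift ht (-2) (2+2*y^2) (-(2*y^2+y^4/6)) (y^4/6))]
    have h0 : ((y^4/6) * ((((0:ℕ):ℝ)+1)^2)^3 + (-(2*y^2+y^4/6)) * ((((0:ℕ):ℝ)+1)^2)^2
        + (2+2*y^2) * (((0:ℕ):ℝ)+1)^2 + (-2)) * Real.exp (-π * t * (((0:ℕ):ℝ)+1)^2) = 0 := by
      norm_num
    rw [h0, zero_add]
    apply tsum_congr
    intro n
    have hc : (((n+1:ℕ):ℝ)+1) = ((n:ℝ)+2) := by push_cast; ring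
    rw [hc, term1 ((n:ℝ)+2)]
  -- second sum
  have hexp2 : ∀ m : ℝ, -π * (1/t) * m^2 = -(4 * (π * m / y)^2) := by
    intro m; rw [ht_def]; field_simp
  have term2 : ∀ m : ℝ,
      ((4096*π^6/y^9) * (m^2)^3 + (256*π^4/y^5 - 4608*π^4/y^7) * (m^2)^2
          + (768*π^2/y^5) * m^2 + 0) * Real.exp (-π * (1/t) * m^2)
        = ((8 / y^3) * (24 * (4*(π*m/y)^2) - 36 * (4*(π*m/y)^2)^2 + 8 * (4*(π*m/y)^2)^3)
            + (16 / y) * (4*(π*m/y)^2)^2) * Real.exp (-(4*(π*m/y)^2)) := by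
    intro m
    rw [hexp2]
    congr 1
    field_simp
    ring
  have key2 := nat_sum hu 0 (768*π^2/y^5) (256*π^4/y^5 - 4608*π^4/y^7) (4096*π^6/y^9)
  have split2 : (∑' n : ℕ, ((4096*π^6/y^9) * (((n:ℝ)+1)^2)^3
        + (256*π^4/y^5 - 4608*π^4/y^7) * (((n:ℝ)+1)^2)^2
        + (768*π^2/y^5) * ((n:ℝ)+1)^2 + 0) * Real.exp (-π * (1/t) * ((n:ℝ)+1)^2))
      = ∑' n : ℕ, ((8 / y ^ 3) * (24 * a n - 36 * (a n) ^ 2 + 8 * (a n) ^ 3)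
          + (16 / y) * (a n) ^ 2) * Real.exp (-(a n)) := by
    apply tsum_congr
    intro n
    have ha : a n = 4*(π*((n:ℝ)+1)/y)^2 := rfl
    rw [ha, term2 ((n:ℝ)+1)]
  rw [split1] at key1
  rw [split2] at key2
  -- solve for the two sums
  have hS1 : (∑' n : ℕ, ((((n:ℝ)+2)^2 - 1) *
        ((1/6) * ((n:ℝ)+2)^4 * y^4 - 2 * ((n:ℝ)+2)^2 * y^2 + 2) *
        Real.exp (-(((n:ℝ)+2)^2 * y^2 / 4))))
      = ((y^4/6) * Qs 3 t + (-(2*y^2+y^4/6)) * Qs 2 t + (2+2*y^2) * Qs 1 t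
          + (-2) * Qs 0 t)/2 + 1 := by linarith
  have hS2 : (∑' n : ℕ, ((8 / y ^ 3) * (24 * a n - 36 * (a n) ^ 2 + 8 * (a n) ^ 3)
        + (16 / y) * (a n) ^ 2) * Real.exp (-(a n)))
      = ((4096*π^6/y^9) * Qs 3 (1/t) + (256*π^4/y^5 - 4608*π^4/y^7) * Qs 2 (1/t)
          + (768*π^2/y^5) * Qs 1 (1/t))/2 := by linarith
  rw [hS1, hS2]
  -- functional equations
  have hQ0 := R0 ht
  have hQ1 := R1 ht
  have hQ2 := R2 ht
  have hQ3 := R3 ht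
  simp only [Es] at hQ0 hQ1 hQ2 hQ3
  set sp := Real.sqrt π with hsp_def
  have hsp0 : 0 < sp := Real.sqrt_pos.mpr hπ
  have hsp2 : sp^2 = π := Real.sq_sqrt hπ.le
  have hv : Real.sqrt t = y/(2*sp) := by
    rw [ht_def, show y^2/(4*π) = (y/(2*sp))^2 by rw [← hsp2]; field_simp; ring]
    exact Real.sqrt_sq (by positivity)
  rw [hv] at hQ0 hQ1 hQ2 hQ3
  have zp : ∀ (x : ℝ) (n : ℕ), x ^ (-(n:ℤ)) = (x^n)⁻¹ := fun x n => by
    rw [zpow_neg, zpow_natCast]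
  rw [show ((-1):ℤ) = -((1:ℕ):ℤ) by norm_num, zp] at hQ0
  rw [show ((-3):ℤ) = -((3:ℕ):ℤ) by norm_num, show ((-5):ℤ) = -((5:ℕ):ℤ) by norm_num,
    zp, zp] at hQ1
  rw [show ((-5):ℤ) = -((5:ℕ):ℤ) by norm_num, show ((-7):ℤ) = -((7:ℕ):ℤ) by norm_num,
    show ((-9):ℤ) = -((9:ℕ):ℤ) by norm_num, zp, zp, zp] at hQ2
  rw [show ((-7):ℤ) = -((7:ℕ):ℤ) by norm_num, show ((-9):ℤ) = -((9:ℕ):ℤ) by norm_num,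
    show ((-11):ℤ) = -((11:ℕ):ℤ) by norm_num, show ((-13):ℤ) = -((13:ℕ):ℤ) by norm_num,
    zp, zp, zp, zp] at hQ3
  rw [show π = sp^2 from hsp2.symm] at hQ1 hQ2 hQ3 ⊢
  have hsp' : sp ≠ 0 := ne_of_gt hsp0
  field_simp at hQ0 hQ1 hQ2 hQ3
  have eQ0 : Qs 0 t = 2*sp/y * Qs 0 (1/t) := by field_simp; linear_combination hQ0
  have eQ1 : Qs 1 t = (4*sp^3*Qs 0 (1/t)*y^5 - 32*sp^7*Qs 1 (1/t)*y^3)/(sp^2*y^8) := by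
    rw [eq_div_iff (by positivity)]; linear_combination (-sp^2*y^3) * hQ1
  have eQ2 : Qs 2 t = (24*sp^5*Qs 0 (1/t)*y^16 - 384*sp^9*Qs 1 (1/t)*y^14
      + 512*sp^13*Qs 2 (1/t)*y^12)/(sp^4*y^21) := by
    rw [eq_div_iff (by positivity)]; linear_combination (sp^4*y^12/4) * hQ2
  have eQ3 : Qs 3 t = (240*sp^7*Qs 0 (1/t)*y^33 - 5760*sp^11*Qs 1 (1/t)*y^31
      + 15360*sp^15*Qs 2 (1/t)*y^29 - 8192*sp^19*Qs 3 (1/t)*y^27)/(sp^6*y^40) := by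
    rw [eq_div_iff (by positivity)]; linear_combination (sp^6*y^27/32) * hQ3
  rw [eQ0, eQ1, eQ2, eQ3]
  field_simp
  ring
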